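/- Let a : 𝔻 × ℝ × {b ∈ ℂ : |b| = 1} → ℂ be continuous with compact support, and define its Weyl integral kernel by ã(y,z) := ∫_ℝ ∫₀^{2π} a(M(z,y); λ, e^{iθ}) · e_{λ,e^{iθ}}(y) · e_{−λ,e^{iθ}}(z) · (λ/(4π))·tanh(πλ/2) (dθ/(2π)) dλ. Then for every holomorphic automorphism g(z) = exp(iα)·φ_w(z) of 𝔻 (α ∈ ℝ, w ∈ 𝔻) and all y, z ∈ 𝔻, ã(g(y), g(z)) = (a^g)~(y, z), where a^g(x; λ, b) := a(g(x); λ, g(b)) and (a^g)~ is the kernel built from a^g by the same formula. -/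

import Mathlib

open MeasureTheory

/-- The open unit disc in the complex plane. -/
def Disc : Set ℂ := {z : ℂ | ‖z‖ < 1}

/-- The geodesic symmetry `φ_a(z) = (a - z)/(1 - conj(a)·z)`. -/
noncomputable def phi (a z : ℂ) : ℂ := (a - z) / (1 - (starRingEnd ℂ) a * z)

/-- The hyperbolic measure `dμ(z) = (1 - |z|²)⁻² dA(z)` on the unit disc. -/
noncomputable def hypMeasure : Measure ℂ :=
  (volume.restrict Disc).withDensity fun z => ENNReal.ofReal ((1 - ‖z‖ ^ 2)⁻¹ ^ 2)

/-- The plane wave `e_{λ,b}(z) = ((1 - |z|²)/|z - b|²)^{(1+iλ)/2}`. -/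
noncomputable def pw (lam : ℝ) (b z : ℂ) : ℂ :=
  (((1 - ‖z‖ ^ 2) / ‖z - b‖ ^ 2 : ℝ) : ℂ) ^
    ((1 + Complex.I * (lam : ℂ)) / 2)

/-- The Weyl integral kernel
`ã(y,z) = ∫_ℝ ∫₀^{2π} a(M(z,y);λ,e^{iθ})·e_{λ,e^{iθ}}(y)·e_{-λ,e^{iθ}}(z)
  ·(λ/(4π))·tanh(πλ/2) (dθ/(2π)) dλ`. -/
noncomputable def weylKernel (M : ℂ → ℂ → ℂ) (a : ℂ → ℝ → ℂ → ℂ) (y z : ℂ) : ℂ :=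
  ∫ lam : ℝ,
    ((lam / (4 * Real.pi) * Real.tanh (Real.pi * lam / 2) / (2 * Real.pi) : ℝ) : ℂ) *
      ∫ θ in (0:ℝ)..(2 * Real.pi),
        a (M z y) lam (Complex.exp (Complex.I * (θ : ℂ))) *
          pw lam (Complex.exp (Complex.I * (θ : ℂ))) y *
          pw (-lam) (Complex.exp (Complex.I * (θ : ℂ))) z


open Complex

lemma one_sub_ne (a z : ℂ) (ha : ‖a‖ < 1) (hz : ‖z‖ ≤ 1) :
    1 - (starRingEnd ℂ) a * z ≠ 0 := by
  intro h
  have h1 : (starRingEnd ℂ) a * z = 1 := by linear_combination -h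
  have := congrArg (‖·‖) h1
  rw [norm_mul, norm_one, Complex.norm_conj] at this
  nlinarith [norm_nonneg z, norm_nonneg a]

lemma normSq_identity (a z : ℂ) :
    Complex.normSq (1 - (starRingEnd ℂ) a * z) - Complex.normSq (a - z)
      = (1 - Complex.normSq a) * (1 - Complex.normSq z) := by
  simp only [Complex.normSq_apply, Complex.sub_re, Complex.sub_im, Complex.mul_re,
    Complex.mul_im, Complex.one_re, Complex.one_im, Complex.conj_re, Complex.conj_im]
  ring

lemma normSq_phi (a z : ℂ) (ha : ‖a‖ < 1) (hz : ‖z‖ ≤ 1) :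
    Complex.normSq (phi a z)
      = Complex.normSq (a - z) / Complex.normSq (1 - (starRingEnd ℂ) a * z) := by
  rw [phi, Complex.normSq_div]

lemma phi_mem (a z : ℂ) (ha : ‖a‖ < 1) (hz : ‖z‖ < 1) :
    ‖phi a z‖ < 1 := by
  have hna : Complex.normSq a < 1 := by
    rw [← Complex.sq_norm] ; nlinarith [norm_nonneg a]
  have hnz : Complex.normSq z < 1 := by
    rw [← Complex.sq_norm] ; nlinarith [norm_nonneg z, norm_nonneg a]
  have hd := one_sub_ne a z ha hz.le
  have hdpos : 0 < Complex.normSq (1 - (starRingEnd ℂ) a * z) :=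
    Complex.normSq_pos.2 hd
  have key := normSq_identity a z
  have h2 : Complex.normSq (phi a z) < 1 := by
    rw [normSq_phi a z ha hz.le, div_lt_one hdpos]
    nlinarith
  rw [← Complex.sq_norm] at h2
  nlinarith [norm_nonneg (phi a z)]


lemma one_sub_ne' (a z : ℂ) (ha : ‖a‖ < 1) (hz : ‖z‖ ≤ 1) :
    1 - a * (starRingEnd ℂ) z ≠ 0 := by
  intro h
  apply one_sub_ne a z ha hz
  have := congrArg (starRingEnd ℂ) h
  simpa [mul_comm] using this

lemma phi_sub (c a z : ℂ) (h1 : 1 - (starRingEnd ℂ) c * a ≠ 0)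
    (h2 : 1 - (starRingEnd ℂ) c * z ≠ 0) :
    phi c a - phi c z
      = (z - a) * (1 - c * (starRingEnd ℂ) c)
        / ((1 - (starRingEnd ℂ) c * a) * (1 - (starRingEnd ℂ) c * z)) := by
  unfold phi
  rw [div_sub_div _ _ h1 h2, div_eq_div_iff (mul_ne_zero h1 h2) (mul_ne_zero h1 h2)]; ring

lemma phi_one_sub (c a z : ℂ) (h1 : 1 - (starRingEnd ℂ) c * a ≠ 0)
    (h2 : 1 - (starRingEnd ℂ) c * z ≠ 0) (h3 : 1 - c * (starRingEnd ℂ) a ≠ 0) :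
    1 - (starRingEnd ℂ) (phi c a) * phi c z
      = (1 - c * (starRingEnd ℂ) c) * (1 - (starRingEnd ℂ) a * z)
        / ((1 - c * (starRingEnd ℂ) a) * (1 - (starRingEnd ℂ) c * z)) := by
  unfold phi
  rw [map_div₀, map_sub, map_sub, map_mul, map_one, Complex.conj_conj]
  rw [div_mul_div_comm, one_sub_div (mul_ne_zero h3 h2),
    div_eq_div_iff (mul_ne_zero h3 h2) (mul_ne_zero h3 h2)]; ring

lemma normSq_ne (c : ℂ) (hc : ‖c‖ < 1) : 1 - c * (starRingEnd ℂ) c ≠ 0 := by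
  rw [Complex.mul_conj]
  have : Complex.normSq c < 1 := by
    rw [← Complex.sq_norm]; nlinarith [norm_nonneg c]
  intro h
  have : ((1 - Complex.normSq c : ℝ) : ℂ) = 0 := by push_cast; linear_combination h
  rw [Complex.ofReal_eq_zero] at this
  linarith

lemma phi_comp (c a z : ℂ) (hc : ‖c‖ < 1) (ha : ‖a‖ < 1)
    (hz : ‖z‖ < 1) :
    phi (phi c a) (phi c z)
      = -((1 - c * (starRingEnd ℂ) a) / (1 - (starRingEnd ℂ) c * a)) * phi a z := by
  have h1 := one_sub_ne c a hc ha.le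
  have h2 := one_sub_ne c z hc hz.le
  have h3 := one_sub_ne' c a hc ha.le
  have h4 := one_sub_ne a z ha hz.le
  have h5 := normSq_ne c hc
  rw [show phi (phi c a) (phi c z)
      = (phi c a - phi c z) / (1 - (starRingEnd ℂ) (phi c a) * phi c z) from rfl,
    phi_sub c a z h1 h2, phi_one_sub c a z h1 h2 h3, phi]
  rw [div_div_div_eq, neg_mul, div_mul_div_comm, eq_neg_iff_add_eq_zero,
    div_add_div _ _ (mul_ne_zero (mul_ne_zero h1 h2) (mul_ne_zero h5 h4)) (mul_ne_zero h1 h4),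
    div_eq_zero_iff]
  left; ring

lemma midpoint_symm_zero (c X : ℂ) (hc : ‖c‖ < 1) (hX : ‖X‖ < 1)
    (h : phi c X = - phi c (-X)) : c = 0 := by
  have d1 := one_sub_ne c X hc hX.le
  have d2 := one_sub_ne c (-X) hc (by simpa using hX.le)
  rw [phi, phi, ← neg_div, div_eq_div_iff d1 d2] at h
  have key : c = (starRingEnd ℂ) c * X ^ 2 := by linear_combination h / 2
  have habs := congrArg (‖·‖) key
  rw [norm_mul, Complex.norm_conj, norm_pow] at habs
  have hX2 : ‖X‖ ^ 2 < 1 := by nlinarith [norm_nonneg X]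
  have : ‖c‖ = 0 := by nlinarith [norm_nonneg c]
  exact norm_eq_zero.1 this

lemma discMidpoint_unique (x y m m' : ℂ) (hx : ‖x‖ < 1) (hy : ‖y‖ < 1)
    (hm : ‖m‖ < 1) (hm' : ‖m'‖ < 1)
    (h1 : phi m x = - phi m y) (h2 : phi m' x = - phi m' y) : m' = m := by
  have hc : ‖phi m m'‖ < 1 := phi_mem m m' hm hm'
  have hX : ‖phi m x‖ < 1 := phi_mem m x hm hx
  have h1' : -phi m x = phi m y := by rw [h1]; ring
  have key : phi (phi m m') (phi m x) = - phi (phi m m') (-(phi m x)) := by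
    rw [h1', phi_comp m m' x hm hm' hx, phi_comp m m' y hm hm' hy, h2]
    ring
  have hc0 : phi m m' = 0 := midpoint_symm_zero _ _ hc hX key
  rw [phi, div_eq_zero_iff] at hc0
  rcases hc0 with h | h
  · linear_combination -h
  · exact absurd h (one_sub_ne m m' hm hm'.le)


noncomputable def ang (α : ℝ) (w : ℂ) (θ : ℝ) : ℝ :=
  α + Real.pi + θ - 2 * Real.arctan ((w.im * Real.cos θ - w.re * Real.sin θ) /
    (1 - w.re * Real.cos θ - w.im * Real.sin θ))

lemma D_pos (w : ℂ) (hw : ‖w‖ < 1) (θ : ℝ) :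
    0 < 1 - w.re * Real.cos θ - w.im * Real.sin θ := by
  have hn : w.re ^ 2 + w.im ^ 2 < 1 := by
    have := Complex.sq_norm w
    rw [Complex.normSq_apply] at this
    nlinarith [norm_nonneg w]
  nlinarith [sq_nonneg (w.re * Real.sin θ - w.im * Real.cos θ),
    Real.sin_sq_add_cos_sq θ, sq_nonneg (w.re * Real.cos θ + w.im * Real.sin θ - 1)]

lemma normSq_v (w : ℂ) (θ : ℝ) :
    Complex.normSq (1 - (starRingEnd ℂ) w * Complex.exp (Complex.I * θ))
      = (1 - w.re * Real.cos θ - w.im * Real.sin θ) ^ 2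
        + (w.im * Real.cos θ - w.re * Real.sin θ) ^ 2 := by
  simp [Complex.normSq_apply, Complex.sub_re, Complex.sub_im, Complex.mul_re, Complex.mul_im,
    Complex.conj_re, Complex.conj_im, Complex.exp_re, Complex.exp_im, Complex.I_re,
    Complex.I_im, Complex.ofReal_re, Complex.ofReal_im]
  ring

lemma v_eq (w : ℂ) (θ : ℝ) :
    1 - (starRingEnd ℂ) w * Complex.exp (Complex.I * θ)
      = ((1 - w.re * Real.cos θ - w.im * Real.sin θ : ℝ) : ℂ)
        + ((w.im * Real.cos θ - w.re * Real.sin θ : ℝ) : ℂ) * Complex.I := by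
  apply Complex.ext <;>
  simp [Complex.sub_re, Complex.sub_im, Complex.mul_re, Complex.mul_im,
    Complex.conj_re, Complex.conj_im, Complex.exp_re, Complex.exp_im,
    Complex.cos_ofReal_re, Complex.sin_ofReal_re] <;> ring

lemma ang_hasDeriv (α : ℝ) (w : ℂ) (hw : ‖w‖ < 1) (θ : ℝ) :
    HasDerivAt (ang α w)
      ((1 - Complex.normSq w) /
        Complex.normSq (1 - (starRingEnd ℂ) w * Complex.exp (Complex.I * θ))) θ := by
  have hD : 0 < 1 - w.re * Real.cos θ - w.im * Real.sin θ := D_pos w hw θ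
  have hN' : HasDerivAt (fun θ => w.im * Real.cos θ - w.re * Real.sin θ)
      (w.im * (-Real.sin θ) - w.re * Real.cos θ) θ :=
    ((Real.hasDerivAt_cos θ).const_mul w.im).sub ((Real.hasDerivAt_sin θ).const_mul w.re)
  have hD' : HasDerivAt (fun θ => 1 - w.re * Real.cos θ - w.im * Real.sin θ)
      (0 - w.re * (-Real.sin θ) - w.im * Real.cos θ) θ :=
    (((hasDerivAt_const θ (1:ℝ)).sub ((Real.hasDerivAt_cos θ).const_mul w.re)).sub
      ((Real.hasDerivAt_sin θ).const_mul w.im))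
  have hQ := hN'.div hD' (ne_of_gt hD)
  have hA := hQ.arctan
  have h0 : HasDerivAt (fun θ : ℝ => α + Real.pi + θ) 1 θ := by
    simpa using (hasDerivAt_id θ).const_add (α + Real.pi)
  have := h0.sub (hA.const_mul 2)
  refine this.congr_deriv ?_
  symm
  rw [normSq_v w θ]
  have h1 : (1 - w.re * Real.cos θ - w.im * Real.sin θ) ^ 2
      + (w.im * Real.cos θ - w.re * Real.sin θ) ^ 2 > 0 := by positivity
  have hnw : Complex.normSq w = w.re ^ 2 + w.im ^ 2 := by rw [Complex.normSq_apply]; ring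
  rw [hnw]
  simp only [Pi.div_apply]
  field_simp
  linear_combination (w.re ^ 2 + w.im ^ 2) * Real.sin_sq_add_cos_sq θ

lemma ang_periodic (α : ℝ) (w : ℂ) (θ : ℝ) : ang α w (θ + 2 * Real.pi) = ang α w θ + 2 * Real.pi := by
  unfold ang
  rw [Real.cos_add_two_pi, Real.sin_add_two_pi]
  ring

lemma exp_two_arctan (t : ℝ) :
    Complex.exp (Complex.I * (-(2 * Real.arctan t) : ℝ))
      = (((1 - t ^ 2) / (1 + t ^ 2) : ℝ) : ℂ) - ((2 * t / (1 + t ^ 2) : ℝ) : ℂ) * Complex.I := by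
  rw [mul_comm, Complex.exp_mul_I]
  have h1 : 0 < 1 + t ^ 2 := by positivity
  have hc : Real.cos (-(2 * Real.arctan t)) = (1 - t ^ 2) / (1 + t ^ 2) := by
    rw [Real.cos_neg, Real.cos_two_mul, Real.cos_arctan, div_pow, one_pow,
      Real.sq_sqrt h1.le]
    field_simp
    ring
  have hs : Real.sin (-(2 * Real.arctan t)) = -(2 * t / (1 + t ^ 2)) := by
    have hsq : Real.sqrt (1 + t ^ 2) * Real.sqrt (1 + t ^ 2) = 1 + t ^ 2 :=
      Real.mul_self_sqrt h1.le
    rw [Real.sin_neg, Real.sin_two_mul, Real.sin_arctan, Real.cos_arctan,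
      show 2 * (t / Real.sqrt (1 + t ^ 2)) * (1 / Real.sqrt (1 + t ^ 2))
        = 2 * t / (Real.sqrt (1 + t ^ 2) * Real.sqrt (1 + t ^ 2)) by ring, hsq]
  rw [← Complex.ofReal_cos, ← Complex.ofReal_sin, hc, hs]
  push_cast
  ring


lemma exp_ang (α : ℝ) (w : ℂ) (hw : ‖w‖ < 1) (θ : ℝ) :
    Complex.exp (Complex.I * ((ang α w θ : ℝ) : ℂ))
      = Complex.exp (Complex.I * (α : ℂ)) * phi w (Complex.exp (Complex.I * θ)) := by
  set D := 1 - w.re * Real.cos θ - w.im * Real.sin θ with hDdef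
  set N := w.im * Real.cos θ - w.re * Real.sin θ with hNdef
  have hD : 0 < D := D_pos w hw θ
  have hDne : (D : ℂ) ≠ 0 := by exact_mod_cast ne_of_gt hD
  have ht1 : (0:ℝ) < 1 + (N/D)^2 := by positivity
  have habs_e : ‖Complex.exp (Complex.I * θ)‖ = 1 := by
    rw [mul_comm]; exact Complex.norm_exp_ofReal_mul_I θ
  have hvne : 1 - (starRingEnd ℂ) w * Complex.exp (Complex.I * θ) ≠ 0 :=
    one_sub_ne w _ hw habs_e.le
  have hv := v_eq w θ
  rw [← hDdef, ← hNdef] at hv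
  have hvne' : ((D:ℂ) + (N:ℂ) * Complex.I) ≠ 0 := hv ▸ hvne
  have hcv : (starRingEnd ℂ) (1 - (starRingEnd ℂ) w * Complex.exp (Complex.I * θ))
      = (D:ℂ) - (N:ℂ) * Complex.I := by
    rw [hv]; simp [map_add, map_mul, Complex.conj_I, Complex.conj_ofReal]; ring
  have hee : Complex.exp (Complex.I * θ) * (starRingEnd ℂ) (Complex.exp (Complex.I * θ)) = 1 := by
    have hconj : (starRingEnd ℂ) (Complex.I * (θ:ℂ)) = -(Complex.I * (θ:ℂ)) := by
      simp [map_mul, Complex.conj_I, Complex.conj_ofReal]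
    rw [← Complex.exp_conj, hconj, ← Complex.exp_add, add_neg_cancel, Complex.exp_zero]
  have hwe : w - Complex.exp (Complex.I * θ)
      = -Complex.exp (Complex.I * θ) * ((D:ℂ) - (N:ℂ) * Complex.I) := by
    have h2 : (starRingEnd ℂ) (1 - (starRingEnd ℂ) w * Complex.exp (Complex.I * θ))
        = 1 - w * (starRingEnd ℂ) (Complex.exp (Complex.I * θ)) := by
      simp [map_sub, map_mul, Complex.conj_conj]
    rw [← hcv, h2]
    linear_combination (-w) * hee
  have hsplit : Complex.exp (Complex.I * ((ang α w θ : ℝ) : ℂ))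
      = Complex.exp (Complex.I * (α:ℂ)) * Complex.exp (Complex.I * (Real.pi:ℂ)) *
        Complex.exp (Complex.I * (θ:ℂ)) *
        Complex.exp (Complex.I * ((-(2 * Real.arctan (N / D)) : ℝ) : ℂ)) := by
    rw [← Complex.exp_add, ← Complex.exp_add, ← Complex.exp_add]
    congr 1
    rw [hNdef, hDdef]
    unfold ang
    push_cast
    ring
  rw [hsplit, exp_two_arctan, show Complex.exp (Complex.I * (Real.pi:ℂ)) = -1 by
    rw [mul_comm]; exact Complex.exp_pi_mul_I, phi, hwe, hv]
  have h1c : ((1 + (N/D)^2 : ℝ) : ℂ) ≠ 0 := by exact_mod_cast ne_of_gt ht1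
  clear_value D N
  clear hDdef hNdef hv hcv hwe hsplit
  push_cast
  push_cast at h1c hvne'
  have hSr : (0:ℝ) < D^2 + N^2 := by positivity
  have hS : ((D:ℂ)^2 + (N:ℂ)^2) ≠ 0 := by
    rw [show ((D:ℂ)^2 + (N:ℂ)^2) = ((D^2 + N^2 : ℝ) : ℂ) by push_cast; ring]
    exact_mod_cast ne_of_gt hSr
  have hS2 : ((D:ℂ) * (N:ℂ)^2 + (D:ℂ)^3) ≠ 0 := by
    rw [show ((D:ℂ) * (N:ℂ)^2 + (D:ℂ)^3) = (D:ℂ) * ((D:ℂ)^2 + (N:ℂ)^2) by ring]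
    exact mul_ne_zero hDne hS
  field_simp [hS, hS2, hvne']
  rw [eq_comm, neg_inj, div_eq_iff (by rw [mul_comm]; exact hvne')]
  linear_combination 2 * (D:ℂ) * (N:ℂ) ^ 2 * Complex.I_sq


lemma one_sub_normSq_phi (w x : ℂ) (h : 1 - (starRingEnd ℂ) w * x ≠ 0) :
    1 - Complex.normSq (phi w x)
      = (1 - Complex.normSq w) * (1 - Complex.normSq x)
        / Complex.normSq (1 - (starRingEnd ℂ) w * x) := by
  have hpos : 0 < Complex.normSq (1 - (starRingEnd ℂ) w * x) := Complex.normSq_pos.2 h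
  rw [phi, Complex.normSq_div]
  rw [one_sub_div hpos.ne']; congr 1
  linarith [normSq_identity w x]

lemma normSq_phi_sub (w x b : ℂ) (h1 : 1 - (starRingEnd ℂ) w * x ≠ 0)
    (h2 : 1 - (starRingEnd ℂ) w * b ≠ 0) :
    Complex.normSq (phi w x - phi w b)
      = Complex.normSq (x - b) * (1 - Complex.normSq w) ^ 2
        / (Complex.normSq (1 - (starRingEnd ℂ) w * x)
            * Complex.normSq (1 - (starRingEnd ℂ) w * b)) := by
  rw [phi_sub w x b h1 h2, Complex.normSq_div, Complex.normSq_mul]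
  have hc : (1 : ℂ) - w * (starRingEnd ℂ) w = ((1 - Complex.normSq w : ℝ) : ℂ) := by
    rw [Complex.mul_conj]; push_cast; ring
  rw [hc, Complex.normSq_ofReal, Complex.normSq_mul,
    show b - x = -(x - b) by ring, Complex.normSq_neg]
  ring

lemma normSq_lt_one (z : ℂ) (hz : ‖z‖ < 1) : Complex.normSq z < 1 := by
  rw [← Complex.sq_norm]; nlinarith [norm_nonneg z]

lemma normSq_exp (α : ℝ) : Complex.normSq (Complex.exp (Complex.I * α)) = 1 := by
  rw [← Complex.sq_norm, mul_comm, Complex.norm_exp_ofReal_mul_I]; norm_num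

lemma base_transform (α : ℝ) (w x b : ℂ) (hw : ‖w‖ < 1) (hx : ‖x‖ < 1)
    (hb : ‖b‖ = 1) :
    (1 - ‖Complex.exp (Complex.I * α) * phi w x‖ ^ 2) /
      ‖Complex.exp (Complex.I * α) * phi w x
        - Complex.exp (Complex.I * α) * phi w b‖ ^ 2
      = ((1 - ‖x‖ ^ 2) / ‖x - b‖ ^ 2) *
        (Complex.normSq (1 - (starRingEnd ℂ) w * b) / (1 - Complex.normSq w)) := by
  have hxb : x ≠ b := fun h => by rw [h, hb] at hx; exact lt_irrefl 1 hx
  have h1 := one_sub_ne w x hw hx.le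
  have h2 := one_sub_ne w b hw hb.le
  have hA : 0 < Complex.normSq (1 - (starRingEnd ℂ) w * x) := Complex.normSq_pos.2 h1
  have hB : 0 < Complex.normSq (1 - (starRingEnd ℂ) w * b) := Complex.normSq_pos.2 h2
  have hW : 0 < 1 - Complex.normSq w := by linarith [normSq_lt_one w hw]
  have hXB : 0 < Complex.normSq (x - b) := Complex.normSq_pos.2 (sub_ne_zero.2 hxb)
  have hfac : Complex.exp (Complex.I * α) * phi w x - Complex.exp (Complex.I * α) * phi w b
      = Complex.exp (Complex.I * α) * (phi w x - phi w b) := by ring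
  rw [hfac]
  simp only [Complex.sq_norm, Complex.normSq_mul, normSq_exp, one_mul]
  rw [one_sub_normSq_phi w x h1, normSq_phi_sub w x b h1 h2]
  have hnb : Complex.normSq b = 1 := by rw [← Complex.sq_norm, hb]; norm_num
  field_simp

lemma pw_transform (lam α : ℝ) (w x b : ℂ) (hw : ‖w‖ < 1) (hx : ‖x‖ < 1)
    (hb : ‖b‖ = 1) :
    pw lam (Complex.exp (Complex.I * α) * phi w b) (Complex.exp (Complex.I * α) * phi w x)
      = pw lam b x *
        (((Complex.normSq (1 - (starRingEnd ℂ) w * b) / (1 - Complex.normSq w) : ℝ)) : ℂ) ^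
          ((1 + Complex.I * (lam : ℂ)) / 2) := by
  unfold pw
  rw [base_transform α w x b hw hx hb]
  have hxb : x ≠ b := fun h => by rw [h, hb] at hx; exact lt_irrefl 1 hx
  have hbase : 0 ≤ (1 - ‖x‖ ^ 2) / ‖x - b‖ ^ 2 :=
    div_nonneg (by nlinarith [norm_nonneg x]) (by positivity)
  have hK : 0 ≤ Complex.normSq (1 - (starRingEnd ℂ) w * b) / (1 - Complex.normSq w) := by
    have hW : 0 < 1 - Complex.normSq w := by linarith [normSq_lt_one w hw]
    exact div_nonneg (Complex.normSq_nonneg _) hW.le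
  rw [Complex.ofReal_mul]
  exact Complex.mul_cpow_ofReal_nonneg hbase hK _

lemma pw_product (lam α : ℝ) (w y z b : ℂ) (hw : ‖w‖ < 1) (hy : ‖y‖ < 1)
    (hz : ‖z‖ < 1) (hb : ‖b‖ = 1) :
    pw lam (Complex.exp (Complex.I * α) * phi w b) (Complex.exp (Complex.I * α) * phi w y) *
      pw (-lam) (Complex.exp (Complex.I * α) * phi w b) (Complex.exp (Complex.I * α) * phi w z)
      = pw lam b y * pw (-lam) b z *
        (((Complex.normSq (1 - (starRingEnd ℂ) w * b) / (1 - Complex.normSq w) : ℝ)) : ℂ) := by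
  rw [pw_transform lam α w y b hw hy hb, pw_transform (-lam) α w z b hw hz hb]
  set K : ℝ := Complex.normSq (1 - (starRingEnd ℂ) w * b) / (1 - Complex.normSq w) with hKdef
  have hW : 0 < 1 - Complex.normSq w := by linarith [normSq_lt_one w hw]
  have hB : 0 < Complex.normSq (1 - (starRingEnd ℂ) w * b) :=
    Complex.normSq_pos.2 (one_sub_ne w b hw hb.le)
  have hK : 0 < K := by rw [hKdef]; exact div_pos hB hW
  have hK0 : ((K : ℝ) : ℂ) ≠ 0 := Complex.ofReal_ne_zero.2 hK.ne'
  have hcp : ((K : ℝ) : ℂ) ^ ((1 + Complex.I * (lam : ℂ)) / 2) *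
      ((K : ℝ) : ℂ) ^ ((1 + Complex.I * ((-lam : ℝ) : ℂ)) / 2) = ((K : ℝ) : ℂ) := by
    rw [← Complex.cpow_add _ _ hK0,
      show (1 + Complex.I * (lam : ℂ)) / 2 + (1 + Complex.I * ((-lam : ℝ) : ℂ)) / 2 = 1 by
        push_cast; ring,
      Complex.cpow_one]
  calc pw lam b y * ((K : ℝ) : ℂ) ^ ((1 + Complex.I * (lam : ℂ)) / 2) *
        (pw (-lam) b z * ((K : ℝ) : ℂ) ^ ((1 + Complex.I * ((-lam : ℝ) : ℂ)) / 2))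
      = pw lam b y * pw (-lam) b z *
        (((K : ℝ) : ℂ) ^ ((1 + Complex.I * (lam : ℂ)) / 2) *
          ((K : ℝ) : ℂ) ^ ((1 + Complex.I * ((-lam : ℝ) : ℂ)) / 2)) := by ring
    _ = pw lam b y * pw (-lam) b z * ((K : ℝ) : ℂ) := by rw [hcp]

section Aux
open Complex

lemma g_mem (α : ℝ) (w x : ℂ) (hw : ‖w‖ < 1) (hx : ‖x‖ < 1) :
    ‖Complex.exp (Complex.I * α) * phi w x‖ < 1 := by
  rw [norm_mul, mul_comm Complex.I, Complex.norm_exp_ofReal_mul_I, one_mul]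
  exact phi_mem w x hw hx

lemma exp_unit (α : ℝ) :
    (starRingEnd ℂ) (Complex.exp (Complex.I * α)) * Complex.exp (Complex.I * α) = 1 := by
  rw [← Complex.exp_conj,
    show (starRingEnd ℂ) (Complex.I * (α:ℂ)) = -(Complex.I * (α:ℂ)) by
      simp [map_mul, Complex.conj_I, Complex.conj_ofReal],
    ← Complex.exp_add, neg_add_cancel, Complex.exp_zero]

lemma phi_rot (u a z : ℂ) (hu : (starRingEnd ℂ) u * u = 1) :
    phi (u * a) (u * z) = u * phi a z := by
  unfold phi
  have h1 : (starRingEnd ℂ) (u * a) * (u * z) = (starRingEnd ℂ) a * z := by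
    rw [map_mul]
    calc (starRingEnd ℂ) u * (starRingEnd ℂ) a * (u * z)
        = ((starRingEnd ℂ) u * u) * ((starRingEnd ℂ) a * z) := by ring
      _ = (starRingEnd ℂ) a * z := by rw [hu, one_mul]
  rw [h1, show u * a - u * z = u * (a - z) by ring, mul_div_assoc]

lemma hexpc : Continuous fun s : ℝ => Complex.exp (Complex.I * (s:ℂ)) :=
  Complex.continuous_exp.comp (continuous_const.mul Complex.continuous_ofReal)

lemma abs_exp_I (s : ℝ) : ‖Complex.exp (Complex.I * s)‖ = 1 := by
  rw [mul_comm]; exact Complex.norm_exp_ofReal_mul_I s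

lemma pw_cont (lam : ℝ) (Y : ℂ) (hY : ‖Y‖ < 1) :
    Continuous fun s : ℝ => pw lam (Complex.exp (Complex.I * s)) Y := by
  unfold pw
  have hne : ∀ s : ℝ, ‖Y - Complex.exp (Complex.I * s)‖ ^ 2 ≠ 0 := by
    intro s
    have : Y ≠ Complex.exp (Complex.I * s) := fun h => by
      rw [h, abs_exp_I s] at hY; exact lt_irrefl 1 hY
    exact pow_ne_zero 2 (norm_ne_zero_iff.mpr (sub_ne_zero.2 this))
  have hbase : Continuous fun s : ℝ =>
      ((1 - ‖Y‖ ^ 2) / ‖Y - Complex.exp (Complex.I * s)‖ ^ 2 : ℝ) :=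
    Continuous.div continuous_const
      ((continuous_norm.comp (continuous_const.sub hexpc)).pow 2) hne
  rw [continuous_iff_continuousAt]
  intro s
  have hpos : 0 < (1 - ‖Y‖ ^ 2) / ‖Y - Complex.exp (Complex.I * s)‖ ^ 2 := by
    have h1 : ‖Y‖ ^ 2 < 1 := by nlinarith [norm_nonneg Y]
    have h2 := (hne s).lt_of_le' (by positivity)
    exact div_pos (by linarith) h2
  exact ContinuousAt.cpow ((Complex.continuous_ofReal.comp hbase).continuousAt)
    continuousAt_const (Complex.ofReal_mem_slitPlane.2 hpos)

end Aux

/-- Equivariance of the Weyl integral kernel: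
`ã(g(y), g(z)) = (a^g)~(y,z)` for every holomorphic automorphism `g = e^{iα}·φ_w` of the
disc, where `a^g(x;λ,b) = a(g(x);λ,g(b))`. -/
theorem stmt3 (M : ℂ → ℂ → ℂ)
    (hM : ∀ x ∈ Disc, ∀ y ∈ Disc, M x y ∈ Disc ∧ phi (M x y) x = -(phi (M x y) y))
    (a : ℂ → ℝ → ℂ → ℂ)
    (hac : Continuous fun p : ℂ × ℝ × ℂ => a p.1 p.2.1 p.2.2)
    (hacs : HasCompactSupport fun p : ℂ × ℝ × ℂ => a p.1 p.2.1 p.2.2)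
    (hasupp : tsupport (fun p : ℂ × ℝ × ℂ => a p.1 p.2.1 p.2.2) ⊆
      Disc ×ˢ (Set.univ : Set ℝ) ×ˢ Metric.sphere (0 : ℂ) 1)
    (α : ℝ) (w : ℂ) (hw : w ∈ Disc) (y : ℂ) (hy : y ∈ Disc) (z : ℂ) (hz : z ∈ Disc) :
    weylKernel M a (Complex.exp (Complex.I * α) * phi w y)
        (Complex.exp (Complex.I * α) * phi w z)
      = weylKernel M
          (fun x lam b =>
            a (Complex.exp (Complex.I * α) * phi w x) lam
              (Complex.exp (Complex.I * α) * phi w b)) y z := by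
  have hw' : ‖w‖ < 1 := hw
  have hy' : ‖y‖ < 1 := hy
  have hz' : ‖z‖ < 1 := hz
  have hgy : ‖Complex.exp (Complex.I * α) * phi w y‖ < 1 := g_mem α w y hw' hy'
  have hgz : ‖Complex.exp (Complex.I * α) * phi w z‖ < 1 := g_mem α w z hw' hz'
  obtain ⟨hmD, hmEq⟩ := hM z hz y hy
  have hm' : ‖M z y‖ < 1 := hmD
  have hgm : ‖Complex.exp (Complex.I * α) * phi w (M z y)‖ < 1 :=
    g_mem α w (M z y) hw' hm'
  obtain ⟨hmLD, hmLEq⟩ := hM (Complex.exp (Complex.I * α) * phi w z) hgz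
    (Complex.exp (Complex.I * α) * phi w y) hgy
  have hgmEq : phi (Complex.exp (Complex.I * α) * phi w (M z y))
        (Complex.exp (Complex.I * α) * phi w z)
      = -(phi (Complex.exp (Complex.I * α) * phi w (M z y))
        (Complex.exp (Complex.I * α) * phi w y)) := by
    rw [phi_rot _ _ _ (exp_unit α), phi_rot _ _ _ (exp_unit α),
      phi_comp w (M z y) z hw' hm' hz', phi_comp w (M z y) y hw' hm' hy', hmEq]
    ring
  have hMeq : M (Complex.exp (Complex.I * α) * phi w z) (Complex.exp (Complex.I * α) * phi w y)
      = Complex.exp (Complex.I * α) * phi w (M z y) :=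
    discMidpoint_unique _ _ _ _ hgz hgy hgm hmLD hgmEq hmLEq
  simp only [weylKernel, hMeq]
  congr 1
  funext lam
  congr 1
  set FL : ℝ → ℂ := fun s =>
    a (Complex.exp (Complex.I * α) * phi w (M z y)) lam (Complex.exp (Complex.I * s)) *
      pw lam (Complex.exp (Complex.I * s)) (Complex.exp (Complex.I * α) * phi w y) *
      pw (-lam) (Complex.exp (Complex.I * s)) (Complex.exp (Complex.I * α) * phi w z)
    with hFLdef
  have hFLc : Continuous FL := by
    refine (Continuous.mul (Continuous.mul ?_ ?_) ?_)
    · exact hac.comp (continuous_const.prodMk (continuous_const.prodMk hexpc))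
    · exact pw_cont lam _ hgy
    · exact pw_cont (-lam) _ hgz
  have hFLper : Function.Periodic FL (2 * Real.pi) := by
    intro s
    simp only [hFLdef]
    rw [show Complex.I * ((s + 2 * Real.pi : ℝ) : ℂ)
        = Complex.I * (s : ℂ) + 2 * (Real.pi : ℂ) * Complex.I by push_cast; ring,
      Complex.exp_add, Complex.exp_two_pi_mul_I, mul_one]
  have hDc : ContinuousOn (fun θ : ℝ => (1 - Complex.normSq w) /
      Complex.normSq (1 - (starRingEnd ℂ) w * Complex.exp (Complex.I * θ)))
      (Set.uIcc 0 (2 * Real.pi)) := by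
    apply Continuous.continuousOn
    refine Continuous.div continuous_const
      (Complex.continuous_normSq.comp (continuous_const.sub (continuous_const.mul hexpc))) ?_
    intro x
    exact (Complex.normSq_pos.2 (one_sub_ne w _ hw' (abs_exp_I x).le)).ne'
  have step1 : ∫ θ in (0:ℝ)..(2 * Real.pi), FL θ
      = ∫ θ in (ang α w 0)..(ang α w 0 + 2 * Real.pi), FL θ := by
    simpa using (hFLper.intervalIntegral_add_eq (ang α w 0) 0).symm
  have step2 : ang α w 0 + 2 * Real.pi = ang α w (2 * Real.pi) := by
    simpa using (ang_periodic α w 0).symm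
  have step3 := intervalIntegral.integral_comp_smul_deriv (a := (0:ℝ)) (b := 2 * Real.pi)
    (f := ang α w)
    (f' := fun θ => (1 - Complex.normSq w) /
      Complex.normSq (1 - (starRingEnd ℂ) w * Complex.exp (Complex.I * θ)))
    (g := FL) (fun θ _ => ang_hasDeriv α w hw' θ) hDc hFLc
  rw [step1, step2, ← step3]
  apply intervalIntegral.integral_congr
  intro θ _
  simp only [hFLdef, Function.comp]
  rw [exp_ang α w hw' θ, mul_assoc,
    pw_product lam α w y z (Complex.exp (Complex.I * θ)) hw' hy' hz' (abs_exp_I θ)]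
  have hvne := one_sub_ne w (Complex.exp (Complex.I * θ)) hw' (abs_exp_I θ).le
  have hnv : 0 < Complex.normSq (1 - (starRingEnd ℂ) w * Complex.exp (Complex.I * θ)) :=
    Complex.normSq_pos.2 hvne
  have hW : 0 < 1 - Complex.normSq w := by linarith [normSq_lt_one w hw']
  have hK1 : (((1 - Complex.normSq w) /
        Complex.normSq (1 - (starRingEnd ℂ) w * Complex.exp (Complex.I * θ)) : ℝ) : ℂ) *
      ((Complex.normSq (1 - (starRingEnd ℂ) w * Complex.exp (Complex.I * θ)) /
        (1 - Complex.normSq w) : ℝ) : ℂ) = 1 := by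
    rw [← Complex.ofReal_mul,
      show (1 - Complex.normSq w) /
          Complex.normSq (1 - (starRingEnd ℂ) w * Complex.exp (Complex.I * θ)) *
          (Complex.normSq (1 - (starRingEnd ℂ) w * Complex.exp (Complex.I * θ)) /
          (1 - Complex.normSq w)) = 1 by field_simp,
      Complex.ofReal_one]
  rw [Complex.real_smul]
  linear_combination (a (Complex.exp (Complex.I * α) * phi w (M z y)) lam
      (Complex.exp (Complex.I * α) * phi w (Complex.exp (Complex.I * θ))) *
      pw lam (Complex.exp (Complex.I * θ)) y * pw (-lam) (Complex.exp (Complex.I * θ)) z) * hK1
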